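/- In the PRST scheme on a rooted tree with parameter α ∈ (0,1), every agent's share coefficient ω_i is nonnegative: for every non-root node i, ω_i ≥ 0. -/
import Mathlib


/-- PRST on a rooted tree: every non-root agent's share coefficient ω_i is nonnegative. -/
theorem prst_omega_nonneg {V : Type*} [Fintype V] (s : V) (p : V → V) (C : V → Finset V)
    (ω Ω : V → ℝ) (α : ℝ) (hα0 : 0 < α) (hα1 : α < 1)
    (hroot : p s = s)
    (hreach : ∀ v, ∃ n, p^[n] v = s)
    (hC : ∀ i j, j ∈ C i ↔ j ≠ i ∧ ∃ n, p^[n] j = i)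
    (hΩs : Ω s = 1)
    (hω : ∀ i, i ≠ s → ω i =
      Ω (p i) * (1 / (((C (p i)).card : ℝ) - ((C i).card : ℝ)) +
        ((((C i).card : ℝ) + 1) / ((C (p i)).card : ℝ) -
          1 / (((C (p i)).card : ℝ) - ((C i).card : ℝ))) * α))
    (hΩ : ∀ i, i ≠ s → Ω i =
      Ω (p i) * ((((C i).card : ℝ) + 1) / ((C (p i)).card : ℝ) -
        1 / (((C (p i)).card : ℝ) - ((C i).card : ℝ))) * (1 - α)) :
    ∀ i, i ≠ s → 0 ≤ ω i := by
  classical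
  -- no nontrivial cycles through non-root nodes
  have hnocyc : ∀ i, i ≠ s → ∀ k, 1 ≤ k → p^[k] i ≠ i := by
    intro i hi k hk hcyc
    obtain ⟨m, hm⟩ := hreach i
    rcases Nat.eq_zero_or_pos m with rfl | hm0
    · exact hi hm
    have hki : p^[k * m] i = i := by
      rw [Function.iterate_mul]
      exact Function.iterate_fixed hcyc m
    have hms : p^[k * m] i = s := by
      have hle : m ≤ k * m := Nat.le_mul_of_pos_left m hk
      have : p^[(k * m - m) + m] i = s := by
        rw [Function.iterate_add_apply, hm]
        exact Function.iterate_fixed hroot _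
      rwa [Nat.sub_add_cancel hle] at this
    exact hi (hki ▸ hms)
  -- card inequality: |C i| + 1 ≤ |C (p i)| for i ≠ s
  have hcard : ∀ i, i ≠ s → (C i).card + 1 ≤ (C (p i)).card := by
    intro i hi
    have hip : i ≠ p i := by
      intro h
      exact hnocyc i hi 1 le_rfl (by simp [← h])
    have hiC : i ∈ C (p i) := (hC (p i) i).mpr ⟨hip, 1, by simp⟩
    have hiCi : i ∉ C i := fun h => ((hC i i).mp h).1 rfl
    have hsub : insert i (C i) ⊆ C (p i) := by
      intro j hj
      rcases Finset.mem_insert.mp hj with rfl | hj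
      · exact hiC
      obtain ⟨hji, n, hn⟩ := (hC i j).mp hj
      refine (hC (p i) j).mpr ⟨?_, n + 1, ?_⟩
      · intro h
        apply hnocyc i hi (n + 1) (Nat.le_add_left 1 n)
        rw [Function.iterate_succ_apply, ← h, hn]
      · rw [Function.iterate_succ_apply', hn]
    calc (C i).card + 1 = (insert i (C i)).card := (Finset.card_insert_of_notMem hiCi).symm
      _ ≤ (C (p i)).card := Finset.card_le_card hsub
  -- the factor (total - base) is nonnegative
  have hX : ∀ i, i ≠ s → 0 ≤ (((C i).card : ℝ) + 1) / ((C (p i)).card : ℝ) -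
      1 / (((C (p i)).card : ℝ) - ((C i).card : ℝ)) := by
    intro i hi
    set a : ℝ := ((C i).card : ℝ)
    set b : ℝ := ((C (p i)).card : ℝ)
    have hab : a + 1 ≤ b := by
      have := hcard i hi
      have : ((C i).card : ℝ) + 1 ≤ ((C (p i)).card : ℝ) := by exact_mod_cast this
      exact this
    have ha : 0 ≤ a := Nat.cast_nonneg _
    have hba : 0 < b - a := by linarith
    have hb : 0 < b := by linarith
    rw [sub_nonneg, div_le_div_iff₀ hba hb]
    nlinarith
  -- base is positive
  have hbase : ∀ i, i ≠ s → 0 < 1 / (((C (p i)).card : ℝ) - ((C i).card : ℝ)) := by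
    intro i hi
    have hab : ((C i).card : ℝ) + 1 ≤ ((C (p i)).card : ℝ) := by exact_mod_cast hcard i hi
    have : (0:ℝ) < ((C (p i)).card : ℝ) - ((C i).card : ℝ) := by linarith
    positivity
  -- Ω is nonnegative
  have hΩpos : ∀ n v, p^[n] v = s → 0 ≤ Ω v := by
    intro n
    induction n with
    | zero => intro v hv; simp at hv; rw [hv, hΩs]; norm_num
    | succ n ih =>
      intro v hv
      by_cases hvs : v = s
      · rw [hvs, hΩs]; norm_num
      have hpv : 0 ≤ Ω (p v) := ih (p v) (by rwa [Function.iterate_succ_apply] at hv)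
      rw [hΩ v hvs]
      exact mul_nonneg (mul_nonneg hpv (hX v hvs)) (by linarith)
  have hΩnn : ∀ v, 0 ≤ Ω v := fun v => by
    obtain ⟨n, hn⟩ := hreach v; exact hΩpos n v hn
  intro i hi
  rw [hω i hi]
  have h1 := hbase i hi
  have h2 := hX i hi
  exact mul_nonneg (hΩnn (p i)) (by nlinarith)
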